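/- For each s ∈ {1,…,m}, t ∈ {1,…,m}, the commutator [(T^{𝔧,𝔟}_{z_s})*, T^{𝔧,𝔟}_{z_t}] is a compact operator on ℋ^{𝔟}_{𝔧}; that is, ℋ^{𝔟}_{𝔧} is an essentially normal Hilbert ℂ[z₁,…,z_m]-module. -/

import Mathlib

open scoped ENNReal

noncomputable section

/-- The box `ℬ^𝔟_𝔧 ⊆ ℕ^m`. -/
def Box (m : ℕ) (J : Finset (Fin m)) (b : Fin m → ℕ) : Set (Fin m → ℕ) :=
  {n | ∀ j ∈ J, n j ≤ b j}

/-- The Bergman space weight `ω₀(𝔫) = (∏ᵢ nᵢ!)·m!/(|𝔫|+m)!`. -/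
def omega0 (m : ℕ) (n : Fin m → ℕ) : ℝ :=
  ((∏ i, (n i).factorial) * m.factorial : ℕ) / (((∑ i, n i) + m).factorial : ℕ)

/-- `𝔫 + e_p`. -/
def bump (m : ℕ) (p : Fin m) (n : Fin m → ℕ) : Fin m → ℕ :=
  Function.update n p (n p + 1)

/-- The Hilbert space `ℋ^𝔟_𝔧` in coordinates w.r.t. its orthonormal basis of normalized
monomials indexed by the box. -/
abbrev BoxSpace (m : ℕ) (J : Finset (Fin m)) (b : Fin m → ℕ) :=
  lp (fun _ : {n : Fin m → ℕ // n ∈ Box m J b} => ℂ) (2 : ℝ≥0∞)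

section Auxiliary
open scoped Classical

def drop (m : ℕ) (p : Fin m) (n : Fin m → ℕ) : Fin m → ℕ :=
  Function.update n p (n p - 1)


def evalCLM {ι : Type*} (q : ι) : lp (fun _ : ι => ℂ) (2:ℝ≥0∞) →L[ℂ] ℂ :=
  LinearMap.mkContinuous
    { toFun := fun x => x q
      map_add' := fun x y => rfl
      map_smul' := fun c x => rfl }
    1 (fun x => by
      show ‖x q‖ ≤ 1 * ‖x‖; simpa using lp.norm_apply_le_norm (by norm_num) x q)

lemma evalCLM_apply {ι : Type*} (q : ι) (x : lp (fun _ : ι => ℂ) (2:ℝ≥0∞)) :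
    evalCLM q x = x q := rfl

lemma rpow_two_eq (r : ℝ) : r ^ (2:ℝ) = r ^ (2:ℕ) := by
  rw [← Real.rpow_natCast]; norm_num

lemma norm_sq_eq {ι : Type*} (f : lp (fun _ : ι => ℂ) (2:ℝ≥0∞)) :
    ‖f‖ ^ 2 = ∑' q, ‖f q‖ ^ 2 := by
  have h := lp.hasSum_norm (p := (2:ℝ≥0∞)) (E := fun _ : ι => ℂ) (by norm_num) f
  have h2 : (2:ℝ≥0∞).toReal = (2:ℝ) := by norm_num
  rw [h2] at h
  calc ‖f‖ ^ 2 = ‖f‖ ^ (2:ℝ) := (rpow_two_eq _).symm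
    _ = ∑' q, ‖f q‖ ^ (2:ℝ) := h.tsum_eq.symm
    _ = ∑' q, ‖f q‖ ^ 2 := by congr 1; funext q; exact rpow_two_eq _

lemma summable_norm_sq {ι : Type*} (f : lp (fun _ : ι => ℂ) (2:ℝ≥0∞)) :
    Summable (fun q => ‖f q‖ ^ 2) := by
  have h := lp.hasSum_norm (p := (2:ℝ≥0∞)) (E := fun _ : ι => ℂ) (by norm_num) f
  have h2 : (2:ℝ≥0∞).toReal = (2:ℝ) := by norm_num
  rw [h2] at h
  simpa [rpow_two_eq] using h.summable

section Key
variable {ι : Type*} [DecidableEq ι]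

local notation "ℋ" => lp (fun _ : ι => ℂ) (2:ℝ≥0∞)

/-- Core estimate: if `C` maps each basis vector `e n` to `w n • e (σ n)` with `σ`
injective on the support of `w`, and `y` vanishes on a set containing all `n` with
`ε ≤ |w n|`, then `‖C y‖ ≤ ε ‖y‖`. -/
lemma core_estimate (C : ℋ →L[ℂ] ℋ) (w : ι → ℝ) (σ : ι → ι)
    (h1 : ∀ n, C (lp.single 2 n 1) = (w n : ℂ) • lp.single 2 (σ n) 1)
    (h2 : ∀ n n', w n ≠ 0 → w n' ≠ 0 → σ n = σ n' → n = n')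
    {ε : ℝ} (hε : 0 < ε) (y : ℋ)
    (hy : ∀ n : ι, ε ≤ |w n| → y n = 0) :
    ‖C y‖ ≤ ε * ‖y‖ := by
  -- coordinates of C y
  have hsum : ∀ q : ι, HasSum (fun n => y n * w n * (if q = σ n then 1 else 0)) ((C y) q) := by
    intro q
    have h0 : HasSum (fun n : ι => lp.single 2 n (y n)) y := lp.hasSum_single (by norm_num) y
    have hC : HasSum (fun n : ι => C (lp.single 2 n (y n))) (C y) := h0.mapL C
    have heq : ∀ n : ι, C (lp.single 2 n (y n)) = (y n * w n) • lp.single 2 (σ n) 1 := by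
      intro n
      have : lp.single (E := fun _ : ι => ℂ) 2 n (y n) = y n • lp.single 2 n 1 := by
        rw [← lp.single_smul]; norm_num
      rw [this, map_smul, h1 n, smul_smul]
    rw [funext heq] at hC
    have := hC.mapL (evalCLM q)
    convert this using 2 with n
    rw [evalCLM_apply, lp.coeFn_smul, Pi.smul_apply, lp.single_apply]
    by_cases h : q = σ n
    · simp [h]
    · simp [h]
    rfl
  -- value of nonzero coordinates
  have value : ∀ q : ι, (C y) q ≠ 0 →
      ∃ n, y n ≠ 0 ∧ w n ≠ 0 ∧ σ n = q ∧ (C y) q = y n * w n := by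
    intro q hq
    by_cases hex : ∃ n, y n * w n * (if q = σ n then 1 else 0) ≠ 0
    · obtain ⟨n, hn⟩ := hex
      have hyn : y n ≠ 0 := by intro h; apply hn; simp [h]
      have hwn : w n ≠ 0 := by
        intro h; apply hn; simp [h]
      have hσ : q = σ n := by
        by_contra h; apply hn; simp [h]
      have huniq : ∀ n' , n' ≠ n → y n' * w n' * (if q = σ n' then 1 else 0) = 0 := by
        intro n' hne
        by_cases hw' : w n' = 0
        · simp [hw']
        by_cases hσ' : q = σ n'
        · exact absurd (h2 n' n hw' hwn (hσ'.symm.trans hσ)) hne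
        · simp [hσ']
      have := (hsum q).unique (hasSum_single (f := fun n => y n * w n * (if q = σ n then 1 else 0)) n huniq)
      refine ⟨n, hyn, hwn, hσ.symm, ?_⟩
      rw [this]; simp [hσ]
    · push_neg at hex
      have : HasSum (fun n => y n * w n * (if q = σ n then 1 else 0)) 0 := by
        convert hasSum_zero with n
        exact hex n
      exact absurd ((hsum q).unique this) hq
  -- compare sums of squares
  set f : ι → ℝ := fun q => ‖(C y) q‖ ^ 2 with hf
  have hchoice : ∀ q : Function.support f, (C y) q.1 ≠ 0 := by
    intro q
    have hq := q.2
    rw [Function.mem_support] at hq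
    intro h; apply hq; simp [hf, h]
  choose e he1 he2 he3 he4 using fun q : Function.support f => value q.1 (hchoice q)
  have einj : Function.Injective e := by
    intro q q' h
    apply Subtype.ext
    rw [← he3 q, ← he3 q', h]
  have hle : ∀ q : Function.support f, f q.1 ≤ ε ^ 2 * ‖y (e q)‖ ^ 2 := by
    intro q
    have hwe : |w (e q)| ≤ ε := by
      by_contra h
      push_neg at h
      exact he1 q (hy _ h.le)
    have : f q.1 = ‖y (e q)‖ ^ 2 * |w (e q)| ^ 2 := by
      simp only [hf, he4 q, norm_mul]
      rw [Complex.norm_real, Real.norm_eq_abs]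
      ring
    rw [this]
    have h2' : |w (e q)| ^ 2 ≤ ε ^ 2 := by
      have := abs_nonneg (w (e q))
      nlinarith
    nlinarith [norm_nonneg (y (e q)), sq_nonneg (‖y (e q)‖)]
  have hsumf : Summable (fun q : Function.support f => f q.1) :=
    (summable_norm_sq (C y)).subtype _
  have hsumg : Summable (fun n => ε ^ 2 * ‖y n‖ ^ 2) := (summable_norm_sq y).mul_left _
  have keyineq : ∑' q : Function.support f, f q.1 ≤ ∑' n, ε ^ 2 * ‖y n‖ ^ 2 :=
    Summable.tsum_le_tsum_of_inj e einj (fun c _ => by positivity) hle hsumf hsumg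
  have hsq : ‖C y‖ ^ 2 ≤ (ε * ‖y‖) ^ 2 := by
    rw [norm_sq_eq]
    calc ∑' q, ‖(C y) q‖ ^ 2 = ∑' q : Function.support f, f q.1 :=
          (tsum_subtype_eq_of_support_subset (Set.Subset.refl _)).symm
      _ ≤ ∑' n, ε ^ 2 * ‖y n‖ ^ 2 := keyineq
      _ = ε ^ 2 * ∑' n, ‖y n‖ ^ 2 := tsum_mul_left
      _ = ε ^ 2 * ‖y‖ ^ 2 := by rw [← norm_sq_eq]
      _ = (ε * ‖y‖) ^ 2 := by ring
  have h0 : (0:ℝ) ≤ ε * ‖y‖ := by positivity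
  nlinarith [norm_nonneg (C y)]


def projF (F : Finset ι) : ℋ →L[ℂ] ℋ :=
  ∑ n ∈ F, (evalCLM n).smulRight (lp.single 2 n 1)

lemma projF_apply (F : Finset ι) (x : ℋ) :
    projF F x = ∑ n ∈ F, lp.single 2 n (x n) := by
  simp only [projF, ContinuousLinearMap.sum_apply, ContinuousLinearMap.smulRight_apply,
    evalCLM_apply]
  refine Finset.sum_congr rfl fun n _ => ?_
  rw [← lp.single_smul]
  norm_num

lemma isCompactOperator_rankOne {E F : Type*} [NormedAddCommGroup E] [NormedSpace ℂ E]
    [NormedAddCommGroup F] [NormedSpace ℂ F] (φ : E →L[ℂ] ℂ) (v : F) :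
    IsCompactOperator (φ.smulRight v) := by
  refine ⟨(fun c : ℂ => c • v) '' Metric.closedBall 0 ‖φ‖,
    ((isCompact_closedBall 0 ‖φ‖).image (continuous_id.smul continuous_const)), ?_⟩
  refine Filter.mem_of_superset (Metric.ball_mem_nhds 0 one_pos) ?_
  intro x hx
  refine ⟨φ x, ?_, rfl⟩
  rw [Metric.mem_closedBall, dist_zero_right]
  calc ‖φ x‖ ≤ ‖φ‖ * ‖x‖ := φ.le_opNorm x
    _ ≤ ‖φ‖ * 1 := by
        have := Metric.mem_ball.mp hx
        rw [dist_zero_right] at this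
        exact mul_le_mul_of_nonneg_left this.le (norm_nonneg φ)
    _ = ‖φ‖ := mul_one _

lemma isCompactOperator_projF (F : Finset ι) : IsCompactOperator ⇑(projF (ι := ι) F) := by
  classical
  induction F using Finset.induction with
  | empty => simpa [projF] using isCompactOperator_zero
  | insert n F' hnotmem ih =>
      have : projF (insert n F') =
          (evalCLM n).smulRight (lp.single 2 n 1) + projF F' := by
        simp [projF, Finset.sum_insert hnotmem]
      rw [this]
      exact ((isCompactOperator_rankOne _ _).add ih)

/-- KEY LEMMA -/
lemma key_compact (C : ℋ →L[ℂ] ℋ) (w : ι → ℝ) (σ : ι → ι)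
    (h1 : ∀ n, C (lp.single 2 n 1) = (w n : ℂ) • lp.single 2 (σ n) 1)
    (h2 : ∀ n n', w n ≠ 0 → w n' ≠ 0 → σ n = σ n' → n = n')
    (h3 : ∀ ε : ℝ, 0 < ε → {n : ι | ε ≤ |w n|}.Finite) :
    IsCompactOperator ⇑C := by
  -- For each k, approximate within 1/(k+1)
  have main : ∀ ε : ℝ, 0 < ε → ∃ D : ℋ →L[ℂ] ℋ, IsCompactOperator ⇑D ∧ ‖C - D‖ ≤ ε := by
    intro ε hε
    set F : Finset ι := (h3 ε hε).toFinset with hF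
    refine ⟨C ∘L projF F, ?_, ?_⟩
    · exact (isCompactOperator_projF F).continuous_comp C.continuous
    · refine ContinuousLinearMap.opNorm_le_bound _ hε.le fun x => ?_
      have hyx : (C - C ∘L projF F) x = C (x - projF F x) := by
        simp [map_sub]
      set y := x - projF F x with hy
      -- y vanishes on F
      have hyF : ∀ n : ι, ε ≤ |w n| → y n = 0 := by
        intro n hn
        have hnF : n ∈ F := by rw [hF]; simpa using hn
        have : (projF F x) n = x n := by
          rw [projF_apply, lp.coeFn_sum, Finset.sum_apply]
          rw [Finset.sum_eq_single_of_mem n hnF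
            (fun b _ hbn => lp.single_apply_ne (E := fun _ : ι => ℂ) 2 b (x b) (Ne.symm hbn))]
          exact lp.single_apply_self (E := fun _ : ι => ℂ) 2 n (x n)
        simp [hy, this]
      have hnormy : ‖y‖ ≤ ‖x‖ := by
        have hx2 : ‖y‖ ^ (2:ℝ) = ‖x‖ ^ (2:ℝ) - ∑ i ∈ F, ‖x i‖ ^ (2:ℝ) := by
          have := lp.norm_compl_sum_single (p := (2:ℝ≥0∞)) (E := fun _ : ι => ℂ)
            (by norm_num) x F
          have h2' : (2:ℝ≥0∞).toReal = (2:ℝ) := by norm_num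
          rw [h2'] at this
          rw [hy, projF_apply]
          exact this
        have hsum : (0:ℝ) ≤ ∑ i ∈ F, ‖x i‖ ^ (2:ℝ) :=
          Finset.sum_nonneg fun i _ => Real.rpow_nonneg (norm_nonneg _) _
        have : ‖y‖ ^ (2:ℝ) ≤ ‖x‖ ^ (2:ℝ) := by linarith
        rw [rpow_two_eq, rpow_two_eq] at this
        have h' := Real.sqrt_le_sqrt this
        rwa [Real.sqrt_sq (norm_nonneg _), Real.sqrt_sq (norm_nonneg _)] at h'
      calc ‖(C - C ∘L projF F) x‖ = ‖C y‖ := by rw [hyx]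
        _ ≤ ε * ‖y‖ := core_estimate C w σ h1 h2 hε y hyF
        _ ≤ ε * ‖x‖ := mul_le_mul_of_nonneg_left hnormy hε.le
  choose D hDc hDle using fun k : ℕ => main (1/(k+1)) (by positivity)
  refine isCompactOperator_of_tendsto (l := Filter.atTop) (F := D) ?_
    (Filter.Eventually.of_forall hDc)
  rw [tendsto_iff_norm_sub_tendsto_zero]
  have hnorm : ∀ k : ℕ, ‖D k - C‖ ≤ 1 / (k + 1) := by
    intro k; rw [norm_sub_rev]; exact hDle k
  exact squeeze_zero (fun k => norm_nonneg _) hnorm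
    tendsto_one_div_add_atTop_nhds_zero_nat

end Key


namespace BoxAux

variable {m : ℕ} {J : Finset (Fin m)} {b : Fin m → ℕ}

lemma bump_apply_self (p : Fin m) (n : Fin m → ℕ) : bump m p n p = n p + 1 := by
  simp [bump]

lemma bump_apply_ne (p : Fin m) (n : Fin m → ℕ) {j : Fin m} (h : j ≠ p) :
    bump m p n j = n j := by simp [bump, Function.update_of_ne h]

lemma drop_apply_self (p : Fin m) (n : Fin m → ℕ) : drop m p n p = n p - 1 := by
  simp [drop]

lemma drop_apply_ne (p : Fin m) (n : Fin m → ℕ) {j : Fin m} (h : j ≠ p) :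
    drop m p n j = n j := by simp [drop, Function.update_of_ne h]

lemma drop_bump (p : Fin m) (n : Fin m → ℕ) : drop m p (bump m p n) = n := by
  funext j
  by_cases h : j = p
  · subst h; simp [drop_apply_self, bump_apply_self]
  · simp [drop_apply_ne p _ h, bump_apply_ne p _ h]

lemma bump_drop (p : Fin m) {n : Fin m → ℕ} (h : 1 ≤ n p) : bump m p (drop m p n) = n := by
  funext j
  by_cases hj : j = p
  · subst hj; simp [bump_apply_self, drop_apply_self]; omega
  · simp [bump_apply_ne p _ hj, drop_apply_ne p _ hj]

lemma bump_inj (p : Fin m) {x y : Fin m → ℕ} (h : bump m p x = bump m p y) : x = y := by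
  have := congrArg (drop m p) h
  rwa [drop_bump, drop_bump] at this

lemma drop_inj (p : Fin m) {x y : Fin m → ℕ} (hx : 1 ≤ x p) (hy : 1 ≤ y p)
    (h : drop m p x = drop m p y) : x = y := by
  have := congrArg (bump m p) h
  rwa [bump_drop p hx, bump_drop p hy] at this

lemma sum_bump (p : Fin m) (n : Fin m → ℕ) : ∑ i, bump m p n i = (∑ i, n i) + 1 := by
  rw [bump, Finset.sum_update_of_mem (Finset.mem_univ p)]
  rw [← Finset.sum_erase_add Finset.univ n (Finset.mem_univ p), Finset.sdiff_singleton_eq_erase]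
  ring

lemma sum_drop (p : Fin m) {n : Fin m → ℕ} (h : 1 ≤ n p) :
    (∑ i, drop m p n i) + 1 = ∑ i, n i := by
  conv_rhs => rw [← bump_drop p h]
  rw [sum_bump]

lemma le_sum (p : Fin m) (n : Fin m → ℕ) : n p ≤ ∑ i, n i :=
  Finset.single_le_sum (fun i _ => Nat.zero_le _) (Finset.mem_univ p)

lemma prod_bump (p : Fin m) (n : Fin m → ℕ) :
    ∏ i, (bump m p n i).factorial = (n p + 1) * ∏ i, (n i).factorial := by
  have hupd : ∀ i, (bump m p n i).factorial =
      Function.update (fun j => (n j).factorial) p ((n p + 1).factorial) i := by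
    intro i
    rw [bump]
    exact Function.apply_update (fun _ s => s.factorial) n p (n p + 1) i
  rw [Finset.prod_congr rfl (fun i _ => hupd i),
    Finset.prod_update_of_mem (Finset.mem_univ p),
    ← Finset.prod_erase_mul Finset.univ (fun j => (n j).factorial) (Finset.mem_univ p),
    Finset.sdiff_singleton_eq_erase, Nat.factorial_succ]
  ring

lemma omega0_pos (n : Fin m → ℕ) : 0 < omega0 m n := by
  apply div_pos
  · exact_mod_cast Nat.pos_of_ne_zero (by positivity)
  · exact_mod_cast (Nat.factorial_pos _)

lemma omega0_ratio (p : Fin m) (n : Fin m → ℕ) :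
    omega0 m (bump m p n) / omega0 m n = ((n p : ℝ) + 1) / ((∑ i, n i : ℕ) + m + 1) := by
  have hP : (0:ℝ) < ((∏ i, (n i).factorial : ℕ) : ℝ) := by
    exact_mod_cast Nat.pos_of_ne_zero (by positivity)
  have hM : (0:ℝ) < ((m.factorial : ℕ) : ℝ) := by exact_mod_cast m.factorial_pos
  have hD : (0:ℝ) < ((((∑ i, n i) + m).factorial : ℕ) : ℝ) := by
    exact_mod_cast Nat.factorial_pos _
  rw [omega0, omega0, sum_bump, prod_bump]
  have hfac : ((∑ i, n i) + 1 + m).factorial = ((∑ i, n i) + m + 1) * ((∑ i, n i) + m).factorial := by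
    rw [show (∑ i, n i) + 1 + m = ((∑ i, n i) + m) + 1 by ring, Nat.factorial_succ]
  rw [hfac]
  push_cast
  have hD1 : (0:ℝ) < ((∑ i, n i : ℕ) : ℝ) + m + 1 := by positivity
  field_simp

end BoxAux

namespace BoxAux2
open BoxAux
variable {m : ℕ} {J : Finset (Fin m)} {b : Fin m → ℕ}

lemma box_mono {n n' : Fin m → ℕ} (hn : n ∈ Box m J b) (h : ∀ i, n' i ≤ n i) :
    n' ∈ Box m J b := fun j hj => le_trans (h j) (hn j hj)

lemma drop_mem {n : Fin m → ℕ} (hn : n ∈ Box m J b) (p : Fin m) : drop m p n ∈ Box m J b := by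
  refine box_mono hn fun i => ?_
  by_cases h : i = p
  · subst h; rw [drop_apply_self]; omega
  · rw [drop_apply_ne p _ h]

lemma mem_box_bump_iff {n : Fin m → ℕ} (hn : n ∈ Box m J b) (t : Fin m) :
    bump m t n ∈ Box m J b ↔ (t ∈ J → n t + 1 ≤ b t) := by
  constructor
  · intro h ht
    have := h t ht
    rwa [bump_apply_self] at this
  · intro h j hj
    by_cases hjt : j = t
    · subst hjt; rw [bump_apply_self]; exact h hj
    · rw [bump_apply_ne t _ hjt]; exact hn j hj

lemma omega0_ratio_drop (p : Fin m) {n : Fin m → ℕ} (h : 1 ≤ n p) :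
    omega0 m n / omega0 m (drop m p n) = (n p : ℝ) / ((∑ i, n i : ℕ) + m) := by
  have h1 := omega0_ratio p (drop m p n)
  rw [bump_drop p h] at h1
  rw [h1]
  have h2 : ((drop m p n p : ℕ) : ℝ) + 1 = (n p : ℝ) := by
    rw [drop_apply_self, Nat.cast_sub h]; ring
  have h3 : ((∑ i, drop m p n i : ℕ) : ℝ) + m + 1 = ((∑ i, n i : ℕ) : ℝ) + m := by
    have h4 := sum_drop p h
    have h5 : ((∑ i, drop m p n i : ℕ) : ℝ) + 1 = ((∑ i, n i : ℕ) : ℝ) := by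
      exact_mod_cast congrArg (Nat.cast (R := ℝ)) h4
    linarith
  rw [h2, h3]

lemma finite_large {K : ℝ} (hm : 0 < m) (w : {n : Fin m → ℕ // n ∈ Box m J b} → ℝ)
    (hw : ∀ n, |w n| ≤ K / (((∑ i, n.1 i : ℕ) : ℝ) + m)) {ε : ℝ} (hε : 0 < ε) :
    {n : {n : Fin m → ℕ // n ∈ Box m J b} | ε ≤ |w n|}.Finite := by
  obtain ⟨M, hM⟩ := exists_nat_ge (K / ε)
  have hfin : ({f : Fin m → ℕ | ∀ i, f i ≤ M}).Finite := by
    have hsub : {f : Fin m → ℕ | ∀ i, f i ≤ M} ⊆ Set.Icc (fun _ => 0) (fun _ => M) := by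
      intro f hf
      exact ⟨fun i => Nat.zero_le _, hf⟩
    exact (Set.finite_Icc _ _).subset hsub
  have hpre : ((fun n : {n : Fin m → ℕ // n ∈ Box m J b} => n.1) ⁻¹'
      {f : Fin m → ℕ | ∀ i, f i ≤ M}).Finite :=
    hfin.preimage (Subtype.val_injective.injOn)
  refine hpre.subset ?_
  intro n hn
  have hle : ε ≤ K / (((∑ i, n.1 i : ℕ) : ℝ) + m) := le_trans hn (hw n)
  have hpos : (0:ℝ) < ((∑ i, n.1 i : ℕ) : ℝ) + m := by
    have : (0:ℝ) < (m:ℝ) := by exact_mod_cast hm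
    positivity
  have hKe : ((∑ i, n.1 i : ℕ) : ℝ) + m ≤ K / ε := by
    rw [le_div_iff₀ hε]
    have := (le_div_iff₀ hpos).mp hle
    linarith
  intro i
  have h1 : ((n.1 i : ℕ) : ℝ) ≤ ((∑ i, n.1 i : ℕ) : ℝ) := by
    exact_mod_cast le_sum i n.1
  have h2 : ((n.1 i : ℕ) : ℝ) ≤ (M : ℝ) := by
    have hm0 : (0:ℝ) ≤ (m:ℝ) := by positivity
    linarith
  exact_mod_cast h2

end BoxAux2

local notation "⟪" x ", " y "⟫" => @inner ℂ _ _ x y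

lemma coord_eq_inner {ι : Type*} [DecidableEq ι] (y : lp (fun _ : ι => ℂ) (2:ℝ≥0∞)) (r : ι) :
    y r = ⟪lp.single 2 r 1, y⟫ := by
  rw [lp.inner_single_left]
  simp [RCLike.inner_apply]

lemma inner_single_single {ι : Type*} [DecidableEq ι] (u q : ι) :
    ⟪(lp.single (E := fun _ : ι => ℂ) 2 u 1), lp.single (E := fun _ : ι => ℂ) 2 q 1⟫
      = if u = q then (1:ℂ) else 0 := by
  rw [lp.inner_single_left]
  by_cases h : u = q
  · subst h
    simp [RCLike.inner_apply, lp.single_apply_self]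
  · rw [if_neg h]
    simp only [RCLike.inner_apply]
    rw [lp.single_apply_ne (E := fun _ : ι => ℂ) 2 q (1:ℂ) h]
    simp


end Auxiliary
section AdjointSec
open scoped Classical
open BoxAux BoxAux2

variable {m : ℕ} {J : Finset (Fin m)} {b : Fin m → ℕ}

local notation "ι'" => {n : Fin m → ℕ // n ∈ Box m J b}
local notation "⟪" x ", " y "⟫" => @inner ℂ _ _ x y

lemma adjoint_apply_single
    (T : Fin m → (BoxSpace m J b →L[ℂ] BoxSpace m J b))
    (hT : ∀ (p : Fin m) (n : {n : Fin m → ℕ // n ∈ Box m J b}),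
      T p (lp.single 2 n 1) =
        if h : bump m p n.1 ∈ Box m J b then
          (Real.sqrt (omega0 m (bump m p n.1) / omega0 m n.1) : ℂ) •
            lp.single 2 (⟨bump m p n.1, h⟩ : {n : Fin m → ℕ // n ∈ Box m J b}) 1
        else 0)
    (s : Fin m) (q : {n : Fin m → ℕ // n ∈ Box m J b}) :
    ContinuousLinearMap.adjoint (T s) (lp.single 2 q 1) =
      if h : 1 ≤ q.1 s then
        (Real.sqrt (omega0 m q.1 / omega0 m (drop m s q.1)) : ℂ) •
          lp.single 2 (⟨drop m s q.1, drop_mem q.2 s⟩ : {n : Fin m → ℕ // n ∈ Box m J b}) 1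
      else 0 := by
  apply lp.ext
  funext r
  have hL : (ContinuousLinearMap.adjoint (T s) (lp.single 2 q 1) : ∀ _ : ι', ℂ) r
      = ⟪T s (lp.single 2 r 1), lp.single 2 q 1⟫ := by
    rw [coord_eq_inner]
    exact ContinuousLinearMap.adjoint_inner_right (T s) _ _
  rw [hL, hT s r]
  by_cases hq : 1 ≤ q.1 s
  · rw [dif_pos hq]
    set qd : {n : Fin m → ℕ // n ∈ Box m J b} := ⟨drop m s q.1, drop_mem q.2 s⟩ with hqd
    by_cases hr : r = qd
    · subst hr
      have hb : bump m s (drop m s q.1) = q.1 := bump_drop s hq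
      have hbox : bump m s (qd : ι').1 ∈ Box m J b := by
        rw [hqd]; simpa [hb] using q.2
      rw [dif_pos hbox]
      rw [inner_smul_left, inner_single_single]
      have hidx : (⟨bump m s (qd : ι').1, hbox⟩ : ι') = q := by
        apply Subtype.ext; simpa [hqd] using hb
      rw [if_pos hidx]
      have hsc : (starRingEnd ℂ) ((Real.sqrt (omega0 m (bump m s (qd:ι').1) / omega0 m (qd:ι').1) : ℂ))
          = (Real.sqrt (omega0 m q.1 / omega0 m (drop m s q.1)) : ℂ) := by
        rw [Complex.conj_ofReal]
        have h1 : (qd : ι').1 = drop m s q.1 := rfl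
        rw [h1, hb]
      rw [hsc]
      simp [lp.coeFn_smul, Pi.smul_apply, lp.single_apply_self (E := fun _ : ι' => ℂ)]
      have hv : ((Real.sqrt (omega0 m q.1 / omega0 m (drop m s q.1)) : ℂ) •
          lp.single (E := fun _ : ι' => ℂ) 2 qd 1 : BoxSpace m J b) qd
            = (Real.sqrt (omega0 m q.1 / omega0 m (drop m s q.1)) : ℂ) := by
        rw [lp.coeFn_smul, Pi.smul_apply,
          lp.single_apply_self (E := fun _ : ι' => ℂ) 2 qd (1:ℂ), smul_eq_mul, mul_one]
      exact hv.symm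
    · -- r ≠ qd : both sides zero
      have hRHS : ((Real.sqrt (omega0 m q.1 / omega0 m (drop m s q.1)) : ℂ) •
          lp.single (E := fun _ : ι' => ℂ) 2 qd 1 : BoxSpace m J b) r = 0 := by
        rw [lp.coeFn_smul, Pi.smul_apply,
          lp.single_apply_ne (E := fun _ : ι' => ℂ) 2 qd (1:ℂ) hr]
        simp
      rw [hRHS]
      by_cases hbox : bump m s r.1 ∈ Box m J b
      · rw [dif_pos hbox, inner_smul_left, inner_single_single]
        have hne : (⟨bump m s r.1, hbox⟩ : ι') ≠ q := by
          intro h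
          apply hr
          have : r.1 = drop m s q.1 := by
            have := congrArg (fun z : ι' => drop m s z.1) h
            simpa [drop_bump] using this
          exact Subtype.ext this
        rw [if_neg hne, mul_zero]
      · rw [dif_neg hbox]
        simp
  · rw [dif_neg hq]
    push_neg at hq
    interval_cases h : q.1 s
    all_goals {
      by_cases hbox : bump m s r.1 ∈ Box m J b
      · rw [dif_pos hbox, inner_smul_left, inner_single_single]
        have hne : (⟨bump m s r.1, hbox⟩ : ι') ≠ q := by
          intro hcontra
          have := congrArg (fun z : ι' => z.1 s) hcontra
          simp only at this
          rw [bump_apply_self] at this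
          omega
        rw [if_neg hne, mul_zero]
        simp
      · rw [dif_neg hbox]
        simp }

end AdjointSec
section Helpers2
open BoxAux BoxAux2
variable {m : ℕ} {J : Finset (Fin m)} {b : Fin m → ℕ}

lemma drop_bump_comm {s t : Fin m} (hst : s ≠ t) (x : Fin m → ℕ) :
    drop m s (bump m t x) = bump m t (drop m s x) := by
  funext j
  by_cases hjs : j = s
  · subst hjs
    rw [drop_apply_self, bump_apply_ne t _ hst, bump_apply_ne t _ hst, drop_apply_self]
  · rw [drop_apply_ne s _ hjs]
    by_cases hjt : j = t
    · subst hjt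
      rw [bump_apply_self, bump_apply_self, drop_apply_ne s _ hjs]
    · rw [bump_apply_ne t _ hjt, bump_apply_ne t _ hjt, drop_apply_ne s _ hjs]

lemma bump_box_iff {s t : Fin m} (hst : s ≠ t) {n : Fin m → ℕ} (hn : n ∈ Box m J b) :
    bump m t n ∈ Box m J b ↔ bump m t (drop m s n) ∈ Box m J b := by
  rw [mem_box_bump_iff hn t, mem_box_bump_iff (drop_mem hn s) t,
    drop_apply_ne s n (Ne.symm hst)]

lemma sqrt_prod_div {a c D : ℝ} (ha : 0 ≤ a) (hc : 0 ≤ c) (hD : 0 ≤ D) :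
    Real.sqrt (c / D) * Real.sqrt (a / D) = Real.sqrt (a * c) / D := by
  rw [← Real.sqrt_mul (div_nonneg hc hD)]
  have h1 : c / D * (a / D) = a * c / (D * D) := by ring
  rw [h1, Real.sqrt_div (mul_nonneg ha hc), Real.sqrt_mul_self hD]

end Helpers2
section Columns
open BoxAux BoxAux2
open scoped Classical

variable {m : ℕ} {J : Finset (Fin m)} {b : Fin m → ℕ}
variable (T : Fin m → (BoxSpace m J b →L[ℂ] BoxSpace m J b))
variable (hT : ∀ (p : Fin m) (n : {n : Fin m → ℕ // n ∈ Box m J b}),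
      T p (lp.single 2 n 1) =
        if h : bump m p n.1 ∈ Box m J b then
          (Real.sqrt (omega0 m (bump m p n.1) / omega0 m n.1) : ℂ) •
            lp.single 2 (⟨bump m p n.1, h⟩ : {n : Fin m → ℕ // n ∈ Box m J b}) 1
        else 0)

local notation "ι'" => {n : Fin m → ℕ // n ∈ Box m J b}

include hT

lemma AT_diag (s : Fin m) (n : ι') :
    ContinuousLinearMap.adjoint (T s) (T s (lp.single 2 n 1)) =
      (((if bump m s n.1 ∈ Box m J b then
          ((n.1 s : ℝ) + 1) / (((∑ i, n.1 i : ℕ) : ℝ) + m + 1) else 0) : ℝ) : ℂ) •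
        lp.single 2 n 1 := by
  rw [hT s n]
  by_cases hbox : bump m s n.1 ∈ Box m J b
  · rw [dif_pos hbox, if_pos hbox, map_smul,
      adjoint_apply_single T hT s (⟨bump m s n.1, hbox⟩ : ι')]
    have hge : 1 ≤ (⟨bump m s n.1, hbox⟩ : ι').1 s := by
      show 1 ≤ bump m s n.1 s
      rw [bump_apply_self]; omega
    rw [dif_pos hge]
    have hidx : (⟨drop m s (⟨bump m s n.1, hbox⟩ : ι').1,
        drop_mem (⟨bump m s n.1, hbox⟩ : ι').2 s⟩ : ι') = n := by
      apply Subtype.ext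
      exact drop_bump s n.1
    rw [hidx, smul_smul, ← Complex.ofReal_mul]
    congr 1
    have hdb : drop m s (bump m s n.1) = n.1 := drop_bump s n.1
    have heq : omega0 m (⟨bump m s n.1, hbox⟩ : ι').1 /
        omega0 m (drop m s (⟨bump m s n.1, hbox⟩ : ι').1)
        = omega0 m (bump m s n.1) / omega0 m n.1 := by
      show omega0 m (bump m s n.1) / omega0 m (drop m s (bump m s n.1)) = _
      rw [hdb]
    rw [heq, Real.mul_self_sqrt (div_nonneg (omega0_pos _).le (omega0_pos _).le)]
    exact_mod_cast omega0_ratio s n.1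
  · rw [dif_neg hbox, if_neg hbox, map_zero, Complex.ofReal_zero, zero_smul]

lemma TA_diag (s : Fin m) (n : ι') :
    T s (ContinuousLinearMap.adjoint (T s) (lp.single 2 n 1)) =
      ((((n.1 s : ℝ) / (((∑ i, n.1 i : ℕ) : ℝ) + m)) : ℝ) : ℂ) • lp.single 2 n 1 := by
  rw [adjoint_apply_single T hT s n]
  by_cases hs : 1 ≤ n.1 s
  · rw [dif_pos hs, map_smul, hT s _]
    have hbd : bump m s (drop m s n.1) = n.1 := bump_drop s hs
    have hbox : bump m s (⟨drop m s n.1, drop_mem n.2 s⟩ : ι').1 ∈ Box m J b := by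
      show bump m s (drop m s n.1) ∈ Box m J b
      rw [hbd]; exact n.2
    rw [dif_pos hbox]
    have hidx : (⟨bump m s (⟨drop m s n.1, drop_mem n.2 s⟩ : ι').1, hbox⟩ : ι') = n := by
      apply Subtype.ext
      exact hbd
    rw [hidx, smul_smul, ← Complex.ofReal_mul]
    congr 1
    have heq : omega0 m (bump m s (⟨drop m s n.1, drop_mem n.2 s⟩ : ι').1) /
        omega0 m (⟨drop m s n.1, drop_mem n.2 s⟩ : ι').1
        = omega0 m n.1 / omega0 m (drop m s n.1) := by
      show omega0 m (bump m s (drop m s n.1)) / omega0 m (drop m s n.1) = _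
      rw [hbd]
    rw [mul_comm, heq, Real.mul_self_sqrt (div_nonneg (omega0_pos _).le (omega0_pos _).le)]
    exact_mod_cast omega0_ratio_drop s hs
  · rw [dif_neg hs, map_zero]
    have : (n.1 s : ℝ) = 0 := by
      push_neg at hs
      interval_cases h : n.1 s
      simp
    rw [this, zero_div, Complex.ofReal_zero, zero_smul]

lemma AT_off {s t : Fin m} (hst : s ≠ t) (n : ι') :
    ContinuousLinearMap.adjoint (T s) (T t (lp.single 2 n 1)) =
      if h : 1 ≤ n.1 s ∧ bump m t (drop m s n.1) ∈ Box m J b then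
        ((Real.sqrt ((n.1 s : ℝ) * ((n.1 t : ℝ) + 1)) /
            (((∑ i, n.1 i : ℕ) : ℝ) + m + 1) : ℝ) : ℂ) •
          lp.single 2 (⟨bump m t (drop m s n.1), h.2⟩ : ι') 1
      else 0 := by
  rw [hT t n]
  by_cases h : 1 ≤ n.1 s ∧ bump m t (drop m s n.1) ∈ Box m J b
  · have hbox : bump m t n.1 ∈ Box m J b := (bump_box_iff hst n.2).2 h.2
    rw [dif_pos hbox, map_smul,
      adjoint_apply_single T hT s (⟨bump m t n.1, hbox⟩ : ι')]
    have hbns : (⟨bump m t n.1, hbox⟩ : ι').1 s = n.1 s := bump_apply_ne t n.1 hst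
    have hge : 1 ≤ (⟨bump m t n.1, hbox⟩ : ι').1 s := by rw [hbns]; exact h.1
    rw [dif_pos hge, dif_pos h]
    have hidx : (⟨drop m s (⟨bump m t n.1, hbox⟩ : ι').1,
        drop_mem (⟨bump m t n.1, hbox⟩ : ι').2 s⟩ : ι')
        = (⟨bump m t (drop m s n.1), h.2⟩ : ι') := by
      apply Subtype.ext
      exact drop_bump_comm hst n.1
    rw [hidx, smul_smul, ← Complex.ofReal_mul]
    congr 1
    -- scalar identity
    have hc1 : omega0 m (bump m t n.1) / omega0 m n.1
        = ((n.1 t : ℝ) + 1) / (((∑ i, n.1 i : ℕ) : ℝ) + m + 1) := omega0_ratio t n.1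
    have hc2 : omega0 m (⟨bump m t n.1, hbox⟩ : ι').1 /
        omega0 m (drop m s (⟨bump m t n.1, hbox⟩ : ι').1)
        = ((n.1 s : ℝ)) / (((∑ i, n.1 i : ℕ) : ℝ) + m + 1) := by
      have := omega0_ratio_drop (m := m) s (n := bump m t n.1) (by rw [bump_apply_ne t n.1 hst]; exact h.1)
      show omega0 m (bump m t n.1) / omega0 m (drop m s (bump m t n.1)) = _
      rw [this, bump_apply_ne t n.1 hst, sum_bump]
      push_cast
      ring_nf
    rw [hc1, hc2,
      sqrt_prod_div (by positivity) (by positivity) (by positivity)]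
  · have h0 : (T t (lp.single 2 n 1) : BoxSpace m J b) =
        (if hbox : bump m t n.1 ∈ Box m J b then
          (Real.sqrt (omega0 m (bump m t n.1) / omega0 m n.1) : ℂ) •
            lp.single 2 (⟨bump m t n.1, hbox⟩ : ι') 1 else 0) := hT t n
    rw [dif_neg h]
    by_cases hbox : bump m t n.1 ∈ Box m J b
    · rw [dif_pos hbox, map_smul,
        adjoint_apply_single T hT s (⟨bump m t n.1, hbox⟩ : ι')]
      have hns : ¬ 1 ≤ n.1 s := by
        intro h1
        exact h ⟨h1, (bump_box_iff hst n.2).1 hbox⟩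
      have hne : ¬ 1 ≤ (⟨bump m t n.1, hbox⟩ : ι').1 s := by
        rw [show (⟨bump m t n.1, hbox⟩ : ι').1 s = n.1 s from bump_apply_ne t n.1 hst]
        exact hns
      rw [dif_neg hne, smul_zero]
    · rw [dif_neg hbox, map_zero]

lemma TA_off {s t : Fin m} (hst : s ≠ t) (n : ι') :
    T t (ContinuousLinearMap.adjoint (T s) (lp.single 2 n 1)) =
      if h : 1 ≤ n.1 s ∧ bump m t (drop m s n.1) ∈ Box m J b then
        ((Real.sqrt ((n.1 s : ℝ) * ((n.1 t : ℝ) + 1)) /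
            (((∑ i, n.1 i : ℕ) : ℝ) + m) : ℝ) : ℂ) •
          lp.single 2 (⟨bump m t (drop m s n.1), h.2⟩ : ι') 1
      else 0 := by
  rw [adjoint_apply_single T hT s n]
  by_cases hs : 1 ≤ n.1 s
  · rw [dif_pos hs, map_smul, hT t (⟨drop m s n.1, drop_mem n.2 s⟩ : ι')]
    by_cases hb2 : bump m t (drop m s n.1) ∈ Box m J b
    · have hcond : 1 ≤ n.1 s ∧ bump m t (drop m s n.1) ∈ Box m J b := ⟨hs, hb2⟩
      rw [dif_pos (show bump m t (⟨drop m s n.1, drop_mem n.2 s⟩ : ι').1 ∈ Box m J b from hb2),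
        dif_pos hcond, smul_smul, ← Complex.ofReal_mul]
      congr 1
      have hc3 : omega0 m n.1 / omega0 m (drop m s n.1)
          = ((n.1 s : ℝ)) / (((∑ i, n.1 i : ℕ) : ℝ) + m) := omega0_ratio_drop s hs
      have hc4 : omega0 m (bump m t (⟨drop m s n.1, drop_mem n.2 s⟩ : ι').1) /
          omega0 m (⟨drop m s n.1, drop_mem n.2 s⟩ : ι').1
          = ((n.1 t : ℝ) + 1) / (((∑ i, n.1 i : ℕ) : ℝ) + m) := by
        have hr := omega0_ratio (m := m) t (drop m s n.1)
        show omega0 m (bump m t (drop m s n.1)) / omega0 m (drop m s n.1) = _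
        rw [hr, drop_apply_ne s n.1 (Ne.symm hst)]
        have hsumc : ((∑ i, drop m s n.1 i : ℕ) : ℝ) + m + 1
            = ((∑ i, n.1 i : ℕ) : ℝ) + m := by
          have h4 := sum_drop s hs
          have h5 : ((∑ i, drop m s n.1 i : ℕ) : ℝ) + 1 = ((∑ i, n.1 i : ℕ) : ℝ) := by
            exact_mod_cast congrArg (Nat.cast (R := ℝ)) h4
          linarith
        rw [hsumc]
      rw [hc3, hc4, mul_comm (Real.sqrt _),
        sqrt_prod_div (by positivity) (by positivity) (by positivity)]
    · rw [dif_neg (show ¬ bump m t (⟨drop m s n.1, drop_mem n.2 s⟩ : ι').1 ∈ Box m J b from hb2),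
        smul_zero, dif_neg (fun hc => hb2 hc.2)]
  · rw [dif_neg hs, map_zero, dif_neg (fun hc => hs hc.1)]


end Columns

set_option maxHeartbeats 2000000

open scoped Classical in
/-- the compressed multiplication operators `T^{𝔧,𝔟}_{z_p}` on `ℋ^𝔟_𝔧` are
essentially normal: all commutators `[(T^{𝔧,𝔟}_{z_s})*, T^{𝔧,𝔟}_{z_t}]` are compact. -/
theorem boxSpace_essentially_normal (m : ℕ) (J : Finset (Fin m)) (b : Fin m → ℕ)
    (T : Fin m → (BoxSpace m J b →L[ℂ] BoxSpace m J b))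
    (hT : ∀ (p : Fin m) (n : {n : Fin m → ℕ // n ∈ Box m J b}),
      T p (lp.single 2 n 1) =
        if h : bump m p n.1 ∈ Box m J b then
          (Real.sqrt (omega0 m (bump m p n.1) / omega0 m n.1) : ℂ) •
            lp.single 2 (⟨bump m p n.1, h⟩ : {n : Fin m → ℕ // n ∈ Box m J b}) 1
        else 0) :
    ∀ s t : Fin m,
      IsCompactOperator
        ⇑(ContinuousLinearMap.adjoint (T s) ∘L T t -
          T t ∘L ContinuousLinearMap.adjoint (T s)) := by
  intro s t
  have hm : 0 < m := s.pos
  have hm1 : (1:ℝ) ≤ (m:ℝ) := by exact_mod_cast hm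
  by_cases hst : s = t
  · subst hst
    refine key_compact _
      (fun n => (if bump m s n.1 ∈ Box m J b then
          ((n.1 s : ℝ) + 1) / (((∑ i, n.1 i : ℕ) : ℝ) + m + 1) else 0)
        - (n.1 s : ℝ) / (((∑ i, n.1 i : ℕ) : ℝ) + m))
      id ?_ ?_ ?_
    · intro n
      rw [ContinuousLinearMap.sub_apply, ContinuousLinearMap.comp_apply,
        ContinuousLinearMap.comp_apply, AT_diag T hT s n, TA_diag T hT s n,
        ← sub_smul, ← Complex.ofReal_sub]
      rfl
    · intro n n' _ _ h
      exact h
    · intro ε hε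
      refine BoxAux2.finite_large (K := (b s : ℝ) + 1) hm _ ?_ hε
      intro n
      set a := (n.1 s : ℝ) with ha
      set S := ((∑ i, n.1 i : ℕ) : ℝ) with hS
      have ha0 : 0 ≤ a := by rw [ha]; positivity
      have haS : a ≤ S := by rw [ha, hS]; exact_mod_cast BoxAux.le_sum s n.1
      have hS0 : 0 ≤ S := le_trans ha0 haS
      have hD2 : (0:ℝ) < S + m := by linarith
      have hD1 : (0:ℝ) < S + m + 1 := by linarith
      have hbs : (0:ℝ) ≤ (b s : ℝ) := by positivity
      by_cases hbox : bump m s n.1 ∈ Box m J b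
      · rw [if_pos hbox]
        have hwn : (a + 1) / (S + m + 1) - a / (S + m)
            = (S + m - a) / ((S + m + 1) * (S + m)) := by
          field_simp
          ring
        rw [hwn, abs_of_nonneg (div_nonneg (by linarith) (by positivity))]
        rw [div_le_div_iff₀ (by positivity) hD2]
        nlinarith [mul_le_mul_of_nonneg_right (show S + m - a ≤ S + m + 1 by linarith) hD2.le,
          mul_nonneg hbs (mul_nonneg hD1.le hD2.le)]
      · rw [if_neg hbox, zero_sub, abs_neg,
          abs_of_nonneg (div_nonneg ha0 hD2.le)]
        have habs : a ≤ (b s : ℝ) := by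
          have h1 := (BoxAux2.mem_box_bump_iff n.2 s).not.1 hbox
          push_neg at h1
          have h2 : n.1 s ≤ b s := n.2 s h1.1
          rw [ha]; exact_mod_cast h2
        gcongr
        linarith
  · -- off-diagonal case
    refine key_compact _
      (fun n => if h : 1 ≤ n.1 s ∧ bump m t (drop m s n.1) ∈ Box m J b then
          Real.sqrt ((n.1 s : ℝ) * ((n.1 t : ℝ) + 1)) / (((∑ i, n.1 i : ℕ) : ℝ) + m + 1)
            - Real.sqrt ((n.1 s : ℝ) * ((n.1 t : ℝ) + 1)) / (((∑ i, n.1 i : ℕ) : ℝ) + m)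
        else 0)
      (fun n => if h : 1 ≤ n.1 s ∧ bump m t (drop m s n.1) ∈ Box m J b then
          (⟨bump m t (drop m s n.1), h.2⟩ : {n : Fin m → ℕ // n ∈ Box m J b}) else n)
      ?_ ?_ ?_
    · intro n
      rw [ContinuousLinearMap.sub_apply, ContinuousLinearMap.comp_apply,
        ContinuousLinearMap.comp_apply, AT_off T hT hst n, TA_off T hT hst n]
      by_cases h : 1 ≤ n.1 s ∧ bump m t (drop m s n.1) ∈ Box m J b
      · simp only [dif_pos h]
        rw [← sub_smul, ← Complex.ofReal_sub]
      · simp only [dif_neg h]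
        simp
    · intro n n' hw hw' hσ
      have hc : 1 ≤ n.1 s ∧ bump m t (drop m s n.1) ∈ Box m J b := by
        by_contra h; rw [dif_neg h] at hw; exact hw rfl
      have hc' : 1 ≤ n'.1 s ∧ bump m t (drop m s n'.1) ∈ Box m J b := by
        by_contra h; rw [dif_neg h] at hw'; exact hw' rfl
      rw [dif_pos hc, dif_pos hc'] at hσ
      have h1 : bump m t (drop m s n.1) = bump m t (drop m s n'.1) :=
        congrArg Subtype.val hσ
      exact Subtype.ext (BoxAux.drop_inj s hc.1 hc'.1 (BoxAux.bump_inj t h1))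
    · intro ε hε
      refine BoxAux2.finite_large (K := 1) hm _ ?_ hε
      intro n
      set a := (n.1 s : ℝ) with ha
      set c := ((n.1 t : ℝ) + 1) with hc
      set S := ((∑ i, n.1 i : ℕ) : ℝ) with hS
      have ha0 : 0 ≤ a := by rw [ha]; positivity
      have haS : a ≤ S := by rw [ha, hS]; exact_mod_cast BoxAux.le_sum s n.1
      have hcS : c ≤ S + 1 := by
        rw [hc, hS]
        have : (n.1 t : ℝ) ≤ S := by rw [hS]; exact_mod_cast BoxAux.le_sum t n.1
        linarith
      have hc0 : 0 ≤ c := by rw [hc]; positivity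
      have hS0 : 0 ≤ S := le_trans ha0 haS
      have hD2 : (0:ℝ) < S + m := by linarith
      have hD1 : (0:ℝ) < S + m + 1 := by linarith
      by_cases h : 1 ≤ n.1 s ∧ bump m t (drop m s n.1) ∈ Box m J b
      · rw [dif_pos h]
        have hwn : Real.sqrt (a * c) / (S + m + 1) - Real.sqrt (a * c) / (S + m)
            = -(Real.sqrt (a * c) / ((S + m + 1) * (S + m))) := by
          field_simp
          ring
        rw [hwn, abs_neg, abs_of_nonneg (by positivity)]
        have hsq : Real.sqrt (a * c) ≤ S + m + 1 := by
          have h1 : a * c ≤ (S + m + 1) ^ 2 := by nlinarith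
          calc Real.sqrt (a * c) ≤ Real.sqrt ((S + m + 1) ^ 2) := Real.sqrt_le_sqrt h1
            _ = S + m + 1 := Real.sqrt_sq hD1.le
        rw [div_le_div_iff₀ (by positivity) hD2]
        nlinarith [Real.sqrt_nonneg (a * c)]
      · rw [dif_neg h]
        simp only [abs_zero]
        positivity
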